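/- If K is an n×n skew-symmetric real matrix, D an m×m diagonal invertible real matrix, B an m×n real matrix of rank n, L an n×1 real vector, and λ = K·L, A = K·Bᵀ·D, then the function H(x) = Σ_{i=1}^m D_{ii} Π_{k=1}^n x_k^{B_{ik}} + Σ_{j=1}^n L_j ln x_j is a constant of motion for the system ẋ_i = x_i(λ_i + Σ_{j=1}^m A_{ij} Π_{k=1}^n x_k^{B_{jk}}) on the open positive orthant; i.e., the gradient of H is orthogonal to the vector field at every point of the positive orthant. -/

import Mathlib

open Real Finset Matrix

theorem qpp_constant_of_motion (n m : ℕ)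
    (K : Matrix (Fin n) (Fin n) ℝ) (hK : Kᵀ = -K)
    (d : Fin m → ℝ) (hd : ∀ i, d i ≠ 0)
    (B : Matrix (Fin m) (Fin n) ℝ) (hB : B.rank = n)
    (L : Fin n → ℝ)
    (lam : Fin n → ℝ) (hlam : lam = K.mulVec L)
    (A : Matrix (Fin n) (Fin m) ℝ) (hA : A = K * Bᵀ * Matrix.diagonal d)
    (H : (Fin n → ℝ) → ℝ)
    (hH : H = fun x => (∑ i : Fin m, d i * ∏ k : Fin n, x k ^ B i k)
        + ∑ j : Fin n, L j * Real.log (x j))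
    (F : (Fin n → ℝ) → (Fin n → ℝ))
    (hF : F = fun x i => x i * (lam i + ∑ j : Fin m, A i j * ∏ k : Fin n, x k ^ B j k)) :
    ∀ x : Fin n → ℝ, (∀ i, 0 < x i) →
      ∑ i : Fin n, fderiv ℝ H x (Pi.single i 1) * F x i = 0 := by
  intro x hx
  have hxne : ∀ k, x k ≠ 0 := fun k => (hx k).ne'
  set P : Fin m → ℝ := fun j => ∏ k, x k ^ B j k with hPdef
  -- derivative of each monomial
  have hmono : ∀ j : Fin m, HasFDerivAt (fun y : Fin n → ℝ => ∏ k, y k ^ B j k)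
      (∑ k : Fin n, (∏ l ∈ Finset.univ.erase k, x l ^ B j l) •
        ((B j k * x k ^ (B j k - 1)) •
          (ContinuousLinearMap.proj k : (Fin n → ℝ) →L[ℝ] ℝ))) x := by
    intro j
    exact HasFDerivAt.finset_prod (fun k _ =>
      (hasFDerivAt_apply k x).rpow_const (Or.inl (hxne k)))
  have hHd : HasFDerivAt H
      ((∑ j : Fin m, d j • (∑ k : Fin n, (∏ l ∈ Finset.univ.erase k, x l ^ B j l) •
        ((B j k * x k ^ (B j k - 1)) •
          (ContinuousLinearMap.proj k : (Fin n → ℝ) →L[ℝ] ℝ))))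
      + ∑ j : Fin n, L j • ((x j)⁻¹ •
          (ContinuousLinearMap.proj j : (Fin n → ℝ) →L[ℝ] ℝ))) x := by
    rw [hH]
    exact HasFDerivAt.add
      (HasFDerivAt.fun_sum fun j _ => (hmono j).const_mul (d j))
      (HasFDerivAt.fun_sum fun j _ =>
        ((hasFDerivAt_apply j x).log (hxne j)).const_mul (L j))
  have hfd := hHd.fderiv
  -- the gradient vector (times x i)
  set w : Fin n → ℝ := fun i => (∑ j : Fin m, d j * (B j i * P j)) + L i with hwdef
  have hval : ∀ i : Fin n, fderiv ℝ H x (Pi.single i 1) = w i / x i := by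
    intro i
    rw [hfd]
    simp only [ContinuousLinearMap.add_apply, ContinuousLinearMap.coe_sum',
      Finset.sum_apply, ContinuousLinearMap.coe_smul', Pi.smul_apply,
      ContinuousLinearMap.proj_apply, smul_eq_mul, Pi.single_apply, mul_ite,
      mul_one, mul_zero, Finset.sum_ite_eq', Finset.mem_univ, if_true]
    have hrpow : ∀ j : Fin m,
        (∏ l ∈ Finset.univ.erase i, x l ^ B j l) * (B j i * x i ^ (B j i - 1))
          = B j i * P j / x i := by
      intro j
      rw [Real.rpow_sub (hx i), Real.rpow_one]
      have : (∏ l ∈ Finset.univ.erase i, x l ^ B j l) * x i ^ B j i = P j := by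
        rw [hPdef]
        exact Finset.prod_erase_mul Finset.univ _ (Finset.mem_univ i)
      field_simp
      rw [← this]
      ring
    rw [hwdef]
    simp only [hrpow]
    rw [add_div, Finset.sum_div]
    refine congrArg₂ (· + ·) (Finset.sum_congr rfl fun j _ => (mul_div_assoc _ _ _).symm)
      (div_eq_mul_inv _ _).symm
  -- identify the vector field with K applied to w
  have hKw : ∀ i : Fin n, lam i + ∑ j : Fin m, A i j * P j = ∑ k : Fin n, K i k * w k := by
    intro i
    have hAe : ∀ j : Fin m, A i j = (∑ k : Fin n, K i k * B j k) * d j := by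
      intro j
      rw [hA, Matrix.mul_diagonal, Matrix.mul_apply]
      simp [Matrix.transpose_apply]
    have hlam' : lam i = ∑ k : Fin n, K i k * L k := by
      rw [hlam]; rfl
    rw [hwdef]
    simp only [mul_add, Finset.sum_add_distrib, ← hlam']
    rw [add_comm]
    congr 1
    simp_rw [Finset.mul_sum]
    rw [Finset.sum_comm]
    refine Finset.sum_congr rfl fun j _ => ?_
    rw [hAe, Finset.sum_mul]
    rw [Finset.sum_mul]
    exact Finset.sum_congr rfl fun k _ => by ring
  -- rewrite the sum
  have hsum : ∑ i : Fin n, fderiv ℝ H x (Pi.single i 1) * F x i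
      = ∑ i : Fin n, w i * ∑ k : Fin n, K i k * w k := by
    refine Finset.sum_congr rfl fun i _ => ?_
    rw [hval, hF]
    show w i / x i * (x i * (lam i + ∑ j : Fin m, A i j * P j)) = _
    rw [← hKw i, div_mul_eq_mul_div, mul_comm (x i), ← mul_assoc, mul_div_assoc,
      div_self (hxne i), mul_one]
  rw [hsum]
  -- skew-symmetry kills the quadratic form
  have hK' : ∀ i j, K j i = -K i j := by
    intro i j
    have := congrFun (congrFun hK i) j
    simpa [Matrix.transpose_apply, Matrix.neg_apply] using this
  have hS : (∑ i : Fin n, w i * ∑ k : Fin n, K i k * w k)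
      = -(∑ i : Fin n, w i * ∑ k : Fin n, K i k * w k) := by
    calc (∑ i : Fin n, w i * ∑ k : Fin n, K i k * w k)
        = ∑ i : Fin n, ∑ k : Fin n, w i * (K i k * w k) := by
          simp [Finset.mul_sum]
      _ = ∑ k : Fin n, ∑ i : Fin n, w i * (K i k * w k) := Finset.sum_comm
      _ = ∑ i : Fin n, ∑ k : Fin n, -(w i * (K i k * w k)) := by
          refine Finset.sum_congr rfl fun i _ => Finset.sum_congr rfl fun k _ => ?_
          rw [hK' i k]; ring
      _ = -(∑ i : Fin n, w i * ∑ k : Fin n, K i k * w k) := by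
          simp [Finset.mul_sum]
  linarith
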